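/- (Theorem 1.) Let g_1, ..., g_m be real polynomials in n variables and let S = {x ∈ ℝⁿ : g_i(x) ≤ 1, i = 1, ..., m}. Assume the quadratic module generated by the polynomials 1 − g_1, ..., 1 − g_m is Archimedean, i.e., there exist a real number N and sum of squares polynomials σ_0, σ_1, ..., σ_m such that N − Σ_{k=1}^n x_k² = σ_0 + Σ_{i=1}^m σ_i · (1 − g_i). Let p be a real polynomial in n variables with p(x) < 1 for all x ∈ S. Then there exist sum of squares polynomials τ_1, ..., τ_m in n variables such that the polynomial 1 − p − Σ_{i=1}^m τ_i · (1 − g_i) is a sum of squares. -/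

import Mathlib

/-- A polynomial is a sum of squares if it is a finite sum of squares of polynomials. -/
def IsSos {n : ℕ} (p : MvPolynomial (Fin n) ℝ) : Prop :=
  ∃ (k : ℕ) (q : Fin k → MvPolynomial (Fin n) ℝ), p = ∑ i, (q i) ^ 2

namespace Putinar
open MvPolynomial Finset

variable {n : ℕ}

local notation "MvP" => MvPolynomial (Fin n) ℝ

lemma isSos_zero : IsSos (0 : MvP) := ⟨0, Fin.elim0, by simp⟩

lemma isSos_sq (q : MvP) : IsSos (q ^ 2) := ⟨1, fun _ => q, by simp⟩

lemma isSos_of_fintype_sum {ι : Type} [Fintype ι] (q : ι → MvP) :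
    IsSos (∑ i, (q i) ^ 2) := by
  classical
  refine ⟨Fintype.card ι, fun j => q ((Fintype.equivFin ι).symm j), ?_⟩
  rw [← Equiv.sum_comp (Fintype.equivFin ι) (fun i => q ((Fintype.equivFin ι).symm i) ^ 2)]
  simp

lemma isSos_add {p q : MvP} (hp : IsSos p) (hq : IsSos q) : IsSos (p + q) := by
  obtain ⟨k, a, rfl⟩ := hp
  obtain ⟨l, b, rfl⟩ := hq
  have : (∑ i, a i ^ 2) + (∑ j, b j ^ 2) = ∑ x : Fin k ⊕ Fin l, (Sum.elim a b x) ^ 2 := by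
    rw [Fintype.sum_sum_type]; simp
  rw [this]
  exact isSos_of_fintype_sum _

lemma isSos_mul {p q : MvP} (hp : IsSos p) (hq : IsSos q) : IsSos (p * q) := by
  obtain ⟨k, a, rfl⟩ := hp
  obtain ⟨l, b, rfl⟩ := hq
  have : (∑ i, a i ^ 2) * (∑ j, b j ^ 2) = ∑ x : Fin k × Fin l, (a x.1 * b x.2) ^ 2 := by
    rw [Finset.sum_mul_sum, Fintype.sum_prod_type]
    simp [mul_pow]
  rw [this]
  exact isSos_of_fintype_sum _

lemma isSos_sum {ι : Type*} (s : Finset ι) (f : ι → MvP) (h : ∀ i ∈ s, IsSos (f i)) :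
    IsSos (∑ i ∈ s, f i) :=
  Finset.sum_induction f IsSos (fun _ _ ha hb => isSos_add ha hb) isSos_zero h

lemma isSos_C {c : ℝ} (hc : 0 ≤ c) : IsSos (C c : MvP) := by
  have : (C c : MvP) = (C (Real.sqrt c)) ^ 2 := by
    rw [← map_pow, Real.sq_sqrt hc]
  rw [this]; exact isSos_sq _

lemma isSos_eval_nonneg {p : MvP} (hp : IsSos p) (x : Fin n → ℝ) :
    0 ≤ MvPolynomial.eval x p := by
  obtain ⟨k, a, rfl⟩ := hp
  rw [map_sum]
  exact Finset.sum_nonneg fun i _ => by rw [map_pow]; exact sq_nonneg _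

lemma isSos_one : IsSos (1 : MvP) := by
  have : (1 : MvP) = 1 ^ 2 := by ring
  rw [this]; exact isSos_sq _

lemma isSos_pow_even (q : MvP) (k : ℕ) : IsSos (q ^ (2 * k)) := by
  rw [mul_comm, pow_mul]; exact isSos_sq _

/-! ### The ball preordering `Σ + Σ·G` -/

def InT (G p : MvP) : Prop := ∃ s₀ s₁, IsSos s₀ ∧ IsSos s₁ ∧ p = s₀ + s₁ * G

variable {G : MvPolynomial (Fin n) ℝ}

lemma inT_of_isSos {p : MvP} (hp : IsSos p) : InT G p :=
  ⟨p, 0, hp, isSos_zero, by ring⟩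

lemma inT_G : InT G G := ⟨0, 1, isSos_zero, isSos_one, by ring⟩

lemma inT_add {p q : MvP} (hp : InT G p) (hq : InT G q) : InT G (p + q) := by
  obtain ⟨s₀, s₁, hs₀, hs₁, rfl⟩ := hp
  obtain ⟨t₀, t₁, ht₀, ht₁, rfl⟩ := hq
  exact ⟨s₀ + t₀, s₁ + t₁, isSos_add hs₀ ht₀, isSos_add hs₁ ht₁, by ring⟩

lemma inT_mul {p q : MvP} (hp : InT G p) (hq : InT G q) : InT G (p * q) := by
  obtain ⟨s₀, s₁, hs₀, hs₁, rfl⟩ := hp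
  obtain ⟨t₀, t₁, ht₀, ht₁, rfl⟩ := hq
  exact ⟨s₀ * t₀ + (s₁ * t₁) * G ^ 2, s₀ * t₁ + s₁ * t₀,
    isSos_add (isSos_mul hs₀ ht₀) (isSos_mul (isSos_mul hs₁ ht₁) (isSos_sq G)),
    isSos_add (isSos_mul hs₀ ht₁) (isSos_mul hs₁ ht₀), by ring⟩

lemma inT_sum {ι : Type*} (s : Finset ι) (f : ι → MvP) (h : ∀ i ∈ s, InT G (f i)) :
    InT G (∑ i ∈ s, f i) :=
  Finset.sum_induction f (InT G) (fun _ _ ha hb => inT_add ha hb)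
    (inT_of_isSos isSos_zero) h

lemma inT_prod {ι : Type*} (s : Finset ι) (f : ι → MvP) (h : ∀ i ∈ s, InT G (f i)) :
    InT G (∏ i ∈ s, f i) :=
  Finset.prod_induction f (InT G) (fun _ _ ha hb => inT_mul ha hb)
    (inT_of_isSos isSos_one) h

lemma inT_pow {p : MvP} (hp : InT G p) (k : ℕ) : InT G (p ^ k) := by
  induction k with
  | zero => simpa using inT_of_isSos isSos_one
  | succ k ih => rw [pow_succ]; exact inT_mul ih hp

/-- The key explicit certificate: `a ± Xᵢ` belongs to `Σ + Σ·(C N - ∑ Xₗ²)`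
whenever `0 < a` and `N ≤ a²`. -/
lemma inT_a_sub_X {N a : ℝ} (ha : 0 < a) (hNa : N ≤ a ^ 2) (i : Fin n) :
    InT (C N - ∑ l, (X l : MvP) ^ 2) (C a - X i) := by
  set G' : MvP := C N - ∑ l, (X l : MvP) ^ 2 with hG'
  have key : (C ((2*a)⁻¹) : MvP) * C (2*a) = 1 := by
    rw [← map_mul, inv_mul_cancel₀ (by positivity), map_one]
  have hrest : ((∑ l, (X l : MvP) ^ 2) - X i ^ 2) = ∑ l ∈ Finset.univ.erase i, (X l : MvP) ^ 2 := by
    rw [← Finset.add_sum_erase Finset.univ _ (Finset.mem_univ i)]; ring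
  refine ⟨C ((2*a)⁻¹) * ((C a - X i)^2 + C (a^2 - N) + ((∑ l, (X l : MvP) ^ 2) - X i ^ 2)),
    C ((2*a)⁻¹), ?_, isSos_C (by positivity), ?_⟩
  · refine isSos_mul (isSos_C (by positivity)) ?_
    rw [hrest]
    exact isSos_add (isSos_add (isSos_sq _) (isSos_C (by linarith))) (isSos_sum _ _ (fun l _ => isSos_sq _))
  · have hCsub : (C (a^2 - N) : MvP) = C a ^ 2 - C N := by
      rw [map_sub, map_pow]
    rw [hG', hCsub]
    have h2 : (C (2*a) : MvP) = 2 * C a := by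
      rw [map_mul, map_ofNat]
    linear_combination (-(C a - (X i : MvP))) * key + (C ((2*a)⁻¹) * (C a - (X i : MvP))) * h2

lemma inT_a_add_X {N a : ℝ} (ha : 0 < a) (hNa : N ≤ a ^ 2) (i : Fin n) :
    InT (C N - ∑ l, (X l : MvP) ^ 2) (C a + X i) := by
  set G' : MvP := C N - ∑ l, (X l : MvP) ^ 2 with hG'
  have key : (C ((2*a)⁻¹) : MvP) * C (2*a) = 1 := by
    rw [← map_mul, inv_mul_cancel₀ (by positivity), map_one]
  have hrest : ((∑ l, (X l : MvP) ^ 2) - X i ^ 2) = ∑ l ∈ Finset.univ.erase i, (X l : MvP) ^ 2 := by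
    rw [← Finset.add_sum_erase Finset.univ _ (Finset.mem_univ i)]; ring
  refine ⟨C ((2*a)⁻¹) * ((C a + X i)^2 + C (a^2 - N) + ((∑ l, (X l : MvP) ^ 2) - X i ^ 2)),
    C ((2*a)⁻¹), ?_, isSos_C (by positivity), ?_⟩
  · refine isSos_mul (isSos_C (by positivity)) ?_
    rw [hrest]
    exact isSos_add (isSos_add (isSos_sq _) (isSos_C (by linarith))) (isSos_sum _ _ (fun l _ => isSos_sq _))
  · have hCsub : (C (a^2 - N) : MvP) = C a ^ 2 - C N := by
      rw [map_sub, map_pow]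
    rw [hG', hCsub]
    have h2 : (C (2*a) : MvP) = 2 * C a := by
      rw [map_mul, map_ofNat]
    linear_combination (-(C a + (X i : MvP))) * key + (C ((2*a)⁻¹) * (C a + (X i : MvP))) * h2

/-! ### Analytic preliminaries -/

lemma continuous_eval (q : MvPolynomial (Fin n) ℝ) :
    Continuous fun x : Fin n → ℝ => MvPolynomial.eval x q := by
  induction q using MvPolynomial.induction_on with
  | C c => simpa using continuous_const
  | add p q hp hq => simp only [map_add]; exact hp.add hq
  | mul_X p i hp => simp only [map_mul, eval_X]; exact hp.mul (continuous_apply i)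

lemma exists_pointwise_bound (D : Set (Fin n → ℝ)) (hD : IsCompact D)
    (q : MvPolynomial (Fin n) ℝ) : ∃ c, ∀ x ∈ D, |MvPolynomial.eval x q| ≤ c := by
  obtain ⟨c, hc⟩ := hD.exists_bound_of_continuousOn (continuous_eval q).continuousOn
  exact ⟨c, fun x hx => hc x hx⟩

/-- Uniform positivity margin near the feasible set, by compactness. -/
lemma exists_margin (D : Set (Fin n → ℝ)) (hD : IsCompact D) {ι : Type} [Fintype ι]
    (h : ι → MvPolynomial (Fin n) ℝ) (f : MvPolynomial (Fin n) ℝ)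
    (hpos : ∀ x ∈ D, (∀ i, 0 ≤ MvPolynomial.eval x (h i)) → 0 < MvPolynomial.eval x f) :
    ∃ δ > (0:ℝ), ∃ m₀ > (0:ℝ), ∀ x ∈ D,
      (∀ i, -δ ≤ MvPolynomial.eval x (h i)) → m₀ ≤ MvPolynomial.eval x f := by
  by_contra hc
  push_neg at hc
  have key : ∀ j : ℕ, ∃ x, x ∈ D ∧ (∀ i, -(1/((j:ℝ)+1)) ≤ MvPolynomial.eval x (h i)) ∧
      MvPolynomial.eval x f < 1/((j:ℝ)+1) := by
    intro j
    obtain ⟨x, hxD, hxh, hxf⟩ := hc (1/((j:ℝ)+1)) (by positivity) (1/((j:ℝ)+1)) (by positivity)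
    exact ⟨x, hxD, hxh, hxf⟩
  choose u hu1 hu2 hu3 using key
  obtain ⟨x0, hx0D, φ, hφ, htend⟩ := hD.tendsto_subseq hu1
  have hmono : ∀ j : ℕ, 1/((φ j : ℝ)+1) ≤ 1/((j:ℝ)+1) := by
    intro j
    apply one_div_le_one_div_of_le (by positivity)
    have := hφ.le_apply (x := j)
    have h' : (j:ℝ) ≤ (φ j : ℝ) := by exact_mod_cast this
    linarith
  have hf0 : MvPolynomial.eval x0 f ≤ 0 := by
    have h1 : Filter.Tendsto (fun j => MvPolynomial.eval (u (φ j)) f) Filter.atTop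
        (nhds (MvPolynomial.eval x0 f)) :=
      ((continuous_eval f).continuousAt.tendsto.comp htend)
    have h2 : Filter.Tendsto (fun j : ℕ => 1/((j:ℝ)+1)) Filter.atTop (nhds 0) :=
      tendsto_one_div_add_atTop_nhds_zero_nat
    exact le_of_tendsto_of_tendsto' h1 h2 (fun j => ((hu3 (φ j)).le.trans (hmono j)))
  have hh0 : ∀ i, 0 ≤ MvPolynomial.eval x0 (h i) := by
    intro i
    have h1 : Filter.Tendsto (fun j => MvPolynomial.eval (u (φ j)) (h i)) Filter.atTop
        (nhds (MvPolynomial.eval x0 (h i))) :=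
      ((continuous_eval (h i)).continuousAt.tendsto.comp htend)
    have h2 : Filter.Tendsto (fun j : ℕ => -(1/((j:ℝ)+1))) Filter.atTop (nhds 0) := by
      simpa using (tendsto_one_div_add_atTop_nhds_zero_nat (𝕜 := ℝ)).neg
    refine le_of_tendsto_of_tendsto' h2 h1 (fun j => le_trans ?_ (hu2 (φ j) i))
    simpa using hmono j
  exact absurd (hpos x0 hx0D hh0) (not_lt.mpr hf0)

/-! ### Penalty estimates -/

lemma psi_upper {t c : ℝ} (hc : 0 < c) (ht0 : 0 ≤ t) (ht : t ≤ c) {k : ℕ} (hk : 1 ≤ k) :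
    t * ((1 - t/c)^k)^2 * (2*k) ≤ c := by
  set s : ℝ := t / c with hs
  have hs0 : 0 ≤ s := by rw [hs]; exact div_nonneg ht0 (le_of_lt hc)
  have hs1 : s ≤ 1 := by
    rw [hs, div_le_one hc]; exact ht
  have hA0 : (0:ℝ) ≤ (1 - s)^(2*k) := by
    rw [mul_comm 2 k, pow_mul]
    positivity
  have hB : 1 + (2*k : ℝ) * s ≤ (1 + s)^(2*k) := by
    have := one_add_mul_le_pow (a := s) (by linarith) (2*k)
    push_cast at this ⊢
    linarith
  have hAB : (1 - s)^(2*k) * (1 + s)^(2*k) ≤ 1 := by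
    rw [← mul_pow]
    have h1 : (1 - s) * (1 + s) ≤ 1 := by nlinarith
    have h0 : 0 ≤ (1 - s) * (1 + s) := by nlinarith
    calc ((1 - s) * (1 + s))^(2*k) ≤ 1^(2*k) := pow_le_pow_left₀ h0 h1 _
    _ = 1 := one_pow _
  have hA1 : (1 - s)^(2*k) * (1 + (2*k : ℝ) * s) ≤ 1 := by
    calc (1 - s)^(2*k) * (1 + (2*k : ℝ) * s) ≤ (1 - s)^(2*k) * (1 + s)^(2*k) :=
          mul_le_mul_of_nonneg_left hB hA0
    _ ≤ 1 := hAB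
  have hkey : s * (1 - s)^(2*k) * (2*k : ℝ) ≤ 1 := by
    have h2 : s * (2*k : ℝ) ≤ 1 + (2*k : ℝ) * s := by nlinarith
    calc s * (1 - s)^(2*k) * (2*k : ℝ) = (1 - s)^(2*k) * (s * (2*k:ℝ)) := by ring
    _ ≤ (1 - s)^(2*k) * (1 + (2*k : ℝ) * s) := mul_le_mul_of_nonneg_left h2 hA0
    _ ≤ 1 := hA1
  have hts : t = c * s := by
    rw [hs, mul_div_cancel₀]; exact ne_of_gt hc
  have hpow : ((1 - s)^k)^2 = (1 - s)^(2*k) := by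
    rw [← pow_mul, mul_comm]
  have hsub : (1 : ℝ) - t/c = 1 - s := by rw [hs]
  calc t * ((1 - t/c)^k)^2 * (2*k)
      = c * (s * (1 - s)^(2*k) * (2*k : ℝ)) := by rw [hsub, hpow, hts]; ring
  _ ≤ c * 1 := mul_le_mul_of_nonneg_left hkey (le_of_lt hc)
  _ = c := mul_one c

lemma psi_neg {t c : ℝ} (hc : 0 < c) (ht : t ≤ 0) (k : ℕ) :
    t * ((1 - t/c)^k)^2 ≤ t := by
  have h1 : (1:ℝ) ≤ 1 - t/c := by
    have : t/c ≤ 0 := div_nonpos_of_nonpos_of_nonneg ht (le_of_lt hc)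
    linarith
  have h2 : (1:ℝ) ≤ ((1 - t/c)^k)^2 := by
    calc (1:ℝ) = (1^k)^2 := by norm_num
    _ ≤ ((1 - t/c)^k)^2 := by
        apply pow_le_pow_left₀ (by positivity)
        exact pow_le_pow_left₀ (by norm_num) h1 k
  calc t * ((1 - t/c)^k)^2 ≤ t * 1 := mul_le_mul_of_nonpos_left h2 ht
  _ = t := mul_one t

/-- The penalty trick: given `f > 0` on `{x ∈ cube : ∀ i, H i ≥ 0}`, subtracting suitable
sos-multiplied penalty terms makes it positive on the whole cube. -/
lemma penalty {r : ℕ} (H : Fin r → MvPolynomial (Fin n) ℝ) (f : MvPolynomial (Fin n) ℝ)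
    {a : ℝ} (ha : 0 < a)
    (hpos : ∀ x : Fin n → ℝ, (∀ i, |x i| ≤ a) → (∀ i, 0 ≤ MvPolynomial.eval x (H i)) →
      0 < MvPolynomial.eval x f) :
    ∃ t : Fin r → MvPolynomial (Fin n) ℝ, (∀ i, IsSos (t i)) ∧
      ∀ x : Fin n → ℝ, (∀ i, |x i| ≤ a) →
        0 < MvPolynomial.eval x (f - ∑ i, H i * t i) := by
  classical
  set D : Set (Fin n → ℝ) := Set.pi Set.univ (fun _ => Set.Icc (-a) a) with hDdef
  have hmemD : ∀ x : Fin n → ℝ, x ∈ D ↔ ∀ i, |x i| ≤ a := by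
    intro x
    constructor
    · intro hx i
      have := hx i (Set.mem_univ i)
      rw [abs_le]; exact ⟨this.1, this.2⟩
    · intro hx i _
      have := hx i
      rw [abs_le] at this
      exact ⟨this.1, this.2⟩
  have hD : IsCompact D := isCompact_univ_pi (fun _ => isCompact_Icc)
  -- uniform bound on the constraints
  have hbd : ∀ i : Fin r, ∃ ci, ∀ x ∈ D, |MvPolynomial.eval x (H i)| ≤ ci :=
    fun i => exists_pointwise_bound D hD (H i)
  choose cs hcs using hbd
  set c : ℝ := 1 + ∑ i, |cs i| with hcdef
  have hc0 : 0 < c := by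
    have : (0:ℝ) ≤ ∑ i, |cs i| := Finset.sum_nonneg (fun i _ => abs_nonneg _)
    rw [hcdef]; linarith
  have hcb : ∀ x ∈ D, ∀ i, |MvPolynomial.eval x (H i)| ≤ c := by
    intro x hx i
    have h1 := hcs i x hx
    have h2 : cs i ≤ ∑ j, |cs j| := by
      calc cs i ≤ |cs i| := le_abs_self _
      _ ≤ ∑ j, |cs j| := Finset.single_le_sum (f := fun j => |cs j|) (fun j _ => abs_nonneg _) (Finset.mem_univ i)
    rw [hcdef]; linarith
  -- margin
  obtain ⟨δ, hδ, m₀, hm₀, hmar⟩ := exists_margin D hD H f (by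
    intro x hx hh
    exact hpos x ((hmemD x).mp hx) hh)
  -- lower bound for f
  obtain ⟨cf, hcf⟩ := exists_pointwise_bound D hD f
  have hcf0 : 0 ≤ cf := by
    have h0D : (fun _ => 0 : Fin n → ℝ) ∈ D := by
      rw [hmemD]; intro i; simpa using le_of_lt ha
    exact le_trans (abs_nonneg _) (hcf _ h0D)
  set lam : ℝ := (cf + 1)/δ with hlam
  have hlam0 : 0 < lam := by positivity
  -- choose k
  obtain ⟨k₀, hk₀⟩ := exists_nat_gt (lam * r * c / min m₀ 1)
  set k : ℕ := k₀ + 1 with hkdef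
  have hk1 : 1 ≤ k := by omega
  have hkbig : lam * r * c < (2*k : ℝ) * min m₀ 1 := by
    have hmin : 0 < min m₀ 1 := lt_min hm₀ one_pos
    have h1 : lam * r * c / min m₀ 1 < (k : ℝ) := by
      calc lam * r * c / min m₀ 1 < (k₀ : ℝ) := hk₀
      _ ≤ (k : ℝ) := by rw [hkdef]; push_cast; linarith
    have h2 : lam * r * c < (k:ℝ) * min m₀ 1 := by
      rw [div_lt_iff₀ hmin] at h1; exact h1
    have h3 : (k:ℝ) * min m₀ 1 ≤ (2*k:ℝ) * min m₀ 1 := by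
      apply mul_le_mul_of_nonneg_right _ (le_of_lt hmin)
      have : (0:ℝ) ≤ (k:ℝ) := by positivity
      linarith
    linarith
  -- the multipliers
  refine ⟨fun i => C lam * ((1 - C c⁻¹ * H i)^k)^2, ?_, ?_⟩
  · intro i
    exact isSos_mul (isSos_C (le_of_lt hlam0)) (isSos_sq _)
  · intro x hx
    have hxD : x ∈ D := (hmemD x).mpr hx
    -- pointwise values
    set tv : Fin r → ℝ := fun i => MvPolynomial.eval x (H i) with htv
    have htvb : ∀ i, |tv i| ≤ c := fun i => hcb x hxD i
    set ψ : Fin r → ℝ := fun i => tv i * ((1 - tv i/c)^k)^2 with hψ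
    have heval : MvPolynomial.eval x (f - ∑ i, H i * (C lam * ((1 - C c⁻¹ * H i)^k)^2))
        = MvPolynomial.eval x f - lam * ∑ i, ψ i := by
      rw [map_sub, map_sum, Finset.mul_sum]
      congr 1
      apply Finset.sum_congr rfl
      intro i _
      rw [map_mul, map_mul, map_pow, map_pow, map_sub, map_mul, eval_C, eval_C, map_one]
      rw [hψ, htv]
      simp only []
      rw [div_eq_inv_mul]
      ring
    rw [heval]
    -- bounds on ψ
    have hψub : ∀ i, ψ i ≤ c/(2*k) := by
      intro i
      rcases le_or_gt 0 (tv i) with h0 | h0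
      · have hub := psi_upper hc0 h0 (le_trans (le_abs_self _) (htvb i)) hk1
        have h2k : (0:ℝ) < 2*k := by positivity
        rw [hψ]
        simp only []
        rw [le_div_iff₀ h2k]
        exact hub
      · calc ψ i ≤ tv i := psi_neg hc0 (le_of_lt h0) k
        _ ≤ 0 := le_of_lt h0
        _ ≤ c/(2*k) := by positivity
    by_cases hall : ∀ i, -δ ≤ tv i
    -- case A : all constraints nearly satisfied
    · have hfm : m₀ ≤ MvPolynomial.eval x f := hmar x hxD hall
      have hsum : ∑ i, ψ i ≤ r * (c/(2*k)) := by
        calc ∑ i, ψ i ≤ ∑ _i : Fin r, c/(2*k) := Finset.sum_le_sum (fun i _ => hψub i)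
        _ = r * (c/(2*k)) := by rw [Finset.sum_const, Finset.card_univ]; simp [nsmul_eq_mul]
      have hkey : lam * (r * (c/(2*k))) < m₀ := by
        have h2k : (0:ℝ) < 2*k := by positivity
        rw [show lam * (r * (c/(2*k))) = lam * r * c / (2*k) by ring, div_lt_iff₀ h2k]
        calc lam * r * c < (2*k:ℝ) * min m₀ 1 := hkbig
        _ ≤ (2*k:ℝ) * m₀ := by
            apply mul_le_mul_of_nonneg_left (min_le_left _ _) (by positivity)
        _ = m₀ * (2*k:ℝ) := by ring
      have : lam * ∑ i, ψ i ≤ lam * (r * (c/(2*k))) :=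
        mul_le_mul_of_nonneg_left hsum (le_of_lt hlam0)
      linarith
    -- case B : some constraint strongly violated
    · push_neg at hall
      obtain ⟨j, hj⟩ := hall
      have hfm : -cf ≤ MvPolynomial.eval x f := by
        have := hcf x hxD
        rw [abs_le] at this
        exact this.1
      have hψj : ψ j ≤ -δ := by
        calc ψ j ≤ tv j := psi_neg hc0 (by linarith) k
        _ ≤ -δ := le_of_lt hj
      have hsum : ∑ i, ψ i ≤ -δ + (r - 1 : ℝ) * (c/(2*k)) := by
        rw [← Finset.add_sum_erase Finset.univ ψ (Finset.mem_univ j)]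
        have h1 : ∑ i ∈ Finset.univ.erase j, ψ i ≤ (r - 1 : ℝ) * (c/(2*k)) := by
          calc ∑ i ∈ Finset.univ.erase j, ψ i ≤ ∑ _i ∈ Finset.univ.erase j, c/(2*k) :=
                Finset.sum_le_sum (fun i _ => hψub i)
          _ = (Finset.univ.erase j).card * (c/(2*k)) := by
              rw [Finset.sum_const]; simp [nsmul_eq_mul]
          _ = (r - 1 : ℝ) * (c/(2*k)) := by
              rw [Finset.card_erase_of_mem (Finset.mem_univ j), Finset.card_univ]
              congr 1
              simp only [Fintype.card_fin]
              have hr : 1 ≤ r := by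
                rcases Nat.eq_zero_or_pos r with h | h
                · exact absurd j.2 (by omega)
                · exact h
              push_cast [Nat.cast_sub hr]
              ring
        linarith
      have hlamδ : lam * δ = cf + 1 := by
        rw [hlam]; field_simp
      have hkey2 : lam * ((r-1:ℝ) * (c/(2*k))) < 1 := by
        have h2k : (0:ℝ) < 2*k := by positivity
        have hr1 : (r - 1 : ℝ) ≤ (r:ℝ) := by linarith
        have hstep : lam * ((r-1:ℝ) * (c/(2*k))) ≤ lam * ((r:ℝ) * (c/(2*k))) := by
          apply mul_le_mul_of_nonneg_left _ (le_of_lt hlam0)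
          apply mul_le_mul_of_nonneg_right hr1 (by positivity)
        have : lam * ((r:ℝ) * (c/(2*k))) < 1 := by
          rw [show lam * (r * (c/(2*k))) = lam * r * c / (2*k) by ring, div_lt_iff₀ h2k]
          calc lam * r * c < (2*k:ℝ) * min m₀ 1 := hkbig
          _ ≤ (2*k:ℝ) * 1 := by
              apply mul_le_mul_of_nonneg_left (min_le_right _ _) (by positivity)
          _ = 1 * (2*k:ℝ) := by ring
        linarith
      have h1 : lam * ∑ i, ψ i ≤ lam * (-δ + (r-1:ℝ) * (c/(2*k))) :=
        mul_le_mul_of_nonneg_left hsum (le_of_lt hlam0)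
      have h2 : lam * (-δ + (r-1:ℝ) * (c/(2*k))) = -(cf+1) + lam * ((r-1:ℝ)*(c/(2*k))) := by
        rw [mul_add]
        have : lam * -δ = -(cf+1) := by rw [← hlamδ]; ring
        rw [this]
      linarith

/-! ### Binomial / falling factorial identities -/

/-- `coefN k m c` : coefficient of the Bernstein-basis expansion of `t^m` in degree `k`. -/
noncomputable def coefN (k m c : ℕ) : ℝ := if m ≤ c then ((k-m).choose (c-m) : ℝ) else 0

/-- `Dr k c m` : real falling-factorial ratio `c(c-1)...(c-m+1)/(k(k-1)...(k-m+1))`. -/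
noncomputable def Dr (k c m : ℕ) : ℝ := ∏ l ∈ range m, (((c:ℝ) - l)/((k:ℝ) - l))

lemma choose_desc (k c m : ℕ) (hmc : m ≤ c) (hck : c ≤ k) :
    (k - m).choose (c - m) * k.descFactorial m = k.choose c * c.descFactorial m := by
  induction m with
  | zero => simp
  | succ m ih =>
    have hmc' : m ≤ c := by omega
    have key : (k - m) * ((k - (m+1)).choose (c - (m+1))) = (k - m).choose (c - m) * (c - m) := by
      have h1 : k - m = (k - (m+1)) + 1 := by omega
      have h2 : c - m = (c - (m+1)) + 1 := by omega
      rw [h1, h2]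
      exact Nat.add_one_mul_choose_eq _ _
    rw [Nat.descFactorial_succ, Nat.descFactorial_succ]
    calc (k - (m+1)).choose (c - (m+1)) * ((k - m) * k.descFactorial m)
        = ((k - m) * ((k - (m+1)).choose (c - (m+1)))) * k.descFactorial m := by ring
    _ = ((k - m).choose (c - m) * (c - m)) * k.descFactorial m := by rw [key]
    _ = (c - m) * ((k - m).choose (c - m) * k.descFactorial m) := by ring
    _ = (c - m) * (k.choose c * c.descFactorial m) := by rw [ih hmc']
    _ = k.choose c * ((c - m) * c.descFactorial m) := by ring

lemma descFactorial_cast_real {c m : ℕ} (hmc : m ≤ c) :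
    ((c.descFactorial m : ℕ) : ℝ) = ∏ l ∈ range m, ((c:ℝ) - l) := by
  rw [Nat.descFactorial_eq_prod_range, Nat.cast_prod]
  apply Finset.prod_congr rfl
  intro l hl
  have hlc : l ≤ c := le_trans (le_of_lt (mem_range.mp hl)) hmc
  push_cast [Nat.cast_sub hlc]
  ring

lemma coefN_eq_choose_mul_Dr {k c m : ℕ} (hck : c ≤ k) (hmk : m ≤ k) :
    coefN k m c = (k.choose c : ℝ) * Dr k c m := by
  rcases le_or_gt m c with hmc | hcm
  · have hkDF : (∏ l ∈ range m, ((k:ℝ) - l)) ≠ 0 := by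
      apply Finset.prod_ne_zero_iff.mpr
      intro l hl
      have : l < m := mem_range.mp hl
      have : (l:ℝ) < (k:ℝ) := by exact_mod_cast lt_of_lt_of_le this hmk
      linarith
    have hDr : Dr k c m = (∏ l ∈ range m, ((c:ℝ) - l)) / (∏ l ∈ range m, ((k:ℝ) - l)) := by
      rw [Dr, Finset.prod_div_distrib]
    have hkDF' : ((k.descFactorial m : ℕ) : ℝ) ≠ 0 := by
      have : k.descFactorial m ≠ 0 := by
        intro h
        rw [Nat.descFactorial_eq_zero_iff_lt] at h
        omega
      exact_mod_cast this
    rw [coefN, if_pos hmc, hDr, ← descFactorial_cast_real hmc,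
      ← descFactorial_cast_real hmk, mul_div_assoc', eq_div_iff hkDF']
    exact_mod_cast choose_desc k c m hmc hck
  · have : Dr k c m = 0 := by
      apply Finset.prod_eq_zero (mem_range.mpr hcm)
      rw [sub_self, zero_div]
    rw [coefN, if_neg (by omega), this, mul_zero]

/-- Generic bound: products of numbers of absolute value `≤ 1` differ by at most the sum of
the differences of their factors. -/
lemma abs_prod_sub_prod_le {ι : Type*} (s : Finset ι) (u v : ι → ℝ)
    (hu : ∀ i ∈ s, |u i| ≤ 1) (hv : ∀ i ∈ s, |v i| ≤ 1) :
    |∏ i ∈ s, u i - ∏ i ∈ s, v i| ≤ ∑ i ∈ s, |u i - v i| := by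
  classical
  induction s using Finset.induction_on with
  | empty => simp
  | @insert a s ha ih =>
    rw [Finset.prod_insert ha, Finset.prod_insert ha, Finset.sum_insert ha]
    have hP : |∏ i ∈ s, u i - ∏ i ∈ s, v i| ≤ ∑ i ∈ s, |u i - v i| :=
      ih (fun i hi => hu i (Finset.mem_insert_of_mem hi))
        (fun i hi => hv i (Finset.mem_insert_of_mem hi))
    have hQ : |∏ i ∈ s, v i| ≤ 1 := by
      rw [Finset.abs_prod]
      exact Finset.prod_le_one (fun i _ => abs_nonneg _)
        (fun i hi => hv i (Finset.mem_insert_of_mem hi))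
    have hua : |u a| ≤ 1 := hu a (Finset.mem_insert_self a s)
    calc |u a * ∏ i ∈ s, u i - v a * ∏ i ∈ s, v i|
        = |u a * (∏ i ∈ s, u i - ∏ i ∈ s, v i) + (u a - v a) * ∏ i ∈ s, v i| := by ring_nf
    _ ≤ |u a * (∏ i ∈ s, u i - ∏ i ∈ s, v i)| + |(u a - v a) * ∏ i ∈ s, v i| := abs_add_le _ _
    _ = |u a| * |∏ i ∈ s, u i - ∏ i ∈ s, v i| + |u a - v a| * |∏ i ∈ s, v i| := by
        rw [abs_mul, abs_mul]
    _ ≤ 1 * (∑ i ∈ s, |u i - v i|) + |u a - v a| * 1 := by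
        apply add_le_add
        · exact mul_le_mul hua hP (abs_nonneg _) zero_le_one
        · exact mul_le_mul_of_nonneg_left hQ (abs_nonneg _)
    _ = |u a - v a| + ∑ i ∈ s, |u i - v i| := by ring

lemma Dr_abs_le_one {k c m d : ℕ} (hck : c ≤ k) (hmd : m ≤ d) (hdk : 2*d ≤ k) :
    |Dr k c m| ≤ 1 := by
  rw [Dr, Finset.abs_prod]
  apply Finset.prod_le_one (fun l _ => abs_nonneg _)
  intro l hl
  have hlm : l < m := mem_range.mp hl
  have hld : l < d := lt_of_lt_of_le hlm hmd
  have h1 : (0:ℝ) < (k:ℝ) - l := by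
    have : l < k := by omega
    have : (l:ℝ) < (k:ℝ) := by exact_mod_cast this
    linarith
  rw [abs_div, div_le_one (by rw [abs_of_pos h1]; exact h1)]
  rw [abs_of_pos h1, abs_sub_le_iff]
  constructor
  · have : (c:ℝ) ≤ (k:ℝ) := by exact_mod_cast hck
    linarith
  · have h2 : (l:ℝ) ≤ (d:ℝ) := by exact_mod_cast le_of_lt hld
    have h3 : (2*d : ℝ) ≤ (k:ℝ) := by exact_mod_cast hdk
    have h4 : (0:ℝ) ≤ (c:ℝ) := by positivity
    linarith

lemma Dr_est {k c m d : ℕ} (hck : c ≤ k) (hmd : m ≤ d) (hdk : 2*d ≤ k) (hd1 : 1 ≤ k) :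
    |Dr k c m - ((c:ℝ)/(k:ℝ))^m| ≤ m * ((d:ℝ)/((k:ℝ)-(d:ℝ))) := by
  have hkpos : (0:ℝ) < (k:ℝ) := by exact_mod_cast hd1
  have hpow : ((c:ℝ)/(k:ℝ))^m = ∏ _l ∈ range m, ((c:ℝ)/(k:ℝ)) := by
    rw [Finset.prod_const, card_range]
  rw [Dr, hpow]
  have hbound := abs_prod_sub_prod_le (range m)
    (fun l => ((c:ℝ) - l)/((k:ℝ) - l)) (fun _ => (c:ℝ)/(k:ℝ)) ?_ ?_
  · refine le_trans hbound ?_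
    have hsum : ∀ l ∈ range m, |((c:ℝ) - l)/((k:ℝ) - l) - (c:ℝ)/(k:ℝ)|
        ≤ (d:ℝ)/((k:ℝ)-(d:ℝ)) := by
      intro l hl
      have hlm : l < m := mem_range.mp hl
      have hld : l < d := lt_of_lt_of_le hlm hmd
      have hlk : l < k := by omega
      have hkl : (0:ℝ) < (k:ℝ) - l := by
        have : (l:ℝ) < (k:ℝ) := by exact_mod_cast hlk
        linarith
      have hkd : (0:ℝ) < (k:ℝ) - d := by
        have h3 : (2*d : ℝ) ≤ (k:ℝ) := by exact_mod_cast hdk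
        have h4 : (0:ℝ) ≤ (d:ℝ) := by positivity
        have h5 : (1:ℝ) ≤ (k:ℝ) := by exact_mod_cast hd1
        rcases Nat.eq_zero_or_pos d with h | h
        · simp [h]; linarith
        · have : (1:ℝ) ≤ (d:ℝ) := by exact_mod_cast h
          linarith
      have heq : ((c:ℝ) - l)/((k:ℝ) - l) - (c:ℝ)/(k:ℝ)
          = ((l:ℝ) * ((c:ℝ) - (k:ℝ)))/(((k:ℝ) - l) * (k:ℝ)) := by
        field_simp
        ring
      rw [heq, abs_div]
      have hnum : |(l:ℝ) * ((c:ℝ) - (k:ℝ))| = (l:ℝ) * ((k:ℝ) - (c:ℝ)) := by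
        rw [abs_mul, abs_of_nonneg (by positivity : (0:ℝ) ≤ (l:ℝ))]
        congr 1
        rw [abs_sub_comm, abs_of_nonneg]
        have : (c:ℝ) ≤ (k:ℝ) := by exact_mod_cast hck
        linarith
      have hden : |((k:ℝ) - l) * (k:ℝ)| = ((k:ℝ) - l) * (k:ℝ) := by
        rw [abs_of_pos (by positivity)]
      rw [hnum, hden, div_le_div_iff₀ (by positivity) hkd]
      have hlled : (l:ℝ) ≤ (d:ℝ) := by exact_mod_cast le_of_lt hld
      have hlk' : (l:ℝ) ≤ (k:ℝ) := by exact_mod_cast le_of_lt hlk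
      have hck' : (0:ℝ) ≤ (k:ℝ) - (c:ℝ) := by
        have : (c:ℝ) ≤ (k:ℝ) := by exact_mod_cast hck
        linarith
      -- l(k-c)(k-d) ≤ d (k-l) k
      have hkc : (k:ℝ) - (c:ℝ) ≤ (k:ℝ) := by
        have : (0:ℝ) ≤ (c:ℝ) := by positivity
        linarith
      have s1 : (l:ℝ) * ((k:ℝ) - c) ≤ (d:ℝ) * (k:ℝ) :=
        mul_le_mul hlled hkc hck' (by positivity)
      have s2 : (k:ℝ) - (d:ℝ) ≤ (k:ℝ) - (l:ℝ) := by linarith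
      calc (l:ℝ) * ((k:ℝ) - c) * ((k:ℝ) - d) ≤ ((d:ℝ) * k) * ((k:ℝ) - l) := by
            apply mul_le_mul s1 s2 (le_of_lt hkd)
            positivity
      _ = (d:ℝ) * (((k:ℝ) - l) * k) := by ring
    calc ∑ l ∈ range m, |((c:ℝ) - l)/((k:ℝ) - l) - (c:ℝ)/(k:ℝ)|
        ≤ ∑ _l ∈ range m, (d:ℝ)/((k:ℝ)-(d:ℝ)) := Finset.sum_le_sum hsum
    _ = m * ((d:ℝ)/((k:ℝ)-(d:ℝ))) := by rw [Finset.sum_const, card_range, nsmul_eq_mul]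
  · intro l hl
    have h := Dr_abs_le_one (m := 1) (d := d) hck (by
      rcases Nat.eq_zero_or_pos d with h | h
      · exfalso; have := mem_range.mp hl; omega
      · omega) hdk
    -- single factor bound; redo directly
    have hlm : l < m := mem_range.mp hl
    have hld : l < d := lt_of_lt_of_le hlm hmd
    have h1 : (0:ℝ) < (k:ℝ) - l := by
      have : l < k := by omega
      have : (l:ℝ) < (k:ℝ) := by exact_mod_cast this
      linarith
    rw [abs_div, div_le_one (by rw [abs_of_pos h1]; exact h1)]
    rw [abs_of_pos h1, abs_sub_le_iff]
    constructor
    · have : (c:ℝ) ≤ (k:ℝ) := by exact_mod_cast hck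
      linarith
    · have h2 : (l:ℝ) ≤ (d:ℝ) := by exact_mod_cast le_of_lt hld
      have h3 : (2*d : ℝ) ≤ (k:ℝ) := by exact_mod_cast hdk
      have h4 : (0:ℝ) ≤ (c:ℝ) := by positivity
      linarith
  · intro l _
    rw [abs_div]
    apply div_le_one_of_le₀
    · apply abs_le_abs
      · exact_mod_cast hck
      · have : (0:ℝ) ≤ (c:ℝ) := by positivity
        have : (0:ℝ) ≤ (k:ℝ) := by positivity
        linarith
    · positivity


/-! ### Bernstein-type expansion of polynomials positive on the unit cube -/

lemma X_pow_expand (i : Fin n) {m k : ℕ} (hmk : m ≤ k) :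
    (X i : MvPolynomial (Fin n) ℝ)^m
      = ∑ c ∈ range (k+1), C (coefN k m c) * ((X i)^c * (1 - X i)^(k-c)) := by
  have hbin := add_pow (X i : MvPolynomial (Fin n) ℝ) (1 - X i) (k - m)
  have hb : ((X i : MvPolynomial (Fin n) ℝ) + (1 - X i))^(k-m) = 1 := by
    simp
  rw [hb] at hbin
  have key : (X i : MvPolynomial (Fin n) ℝ)^m = ∑ j ∈ range (k-m+1),
      C (((k-m).choose j : ℝ)) * ((X i)^(m+j) * (1 - X i)^(k-(m+j))) := by
    calc (X i : MvPolynomial (Fin n) ℝ)^m = (X i)^m * 1 := (mul_one _).symm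
    _ = (X i)^m * ∑ j ∈ range (k-m+1),
        (X i)^j * (1 - X i)^((k-m)-j) * ((k-m).choose j : MvPolynomial (Fin n) ℝ) := by
        rw [← hbin]
    _ = ∑ j ∈ range (k-m+1),
        C (((k-m).choose j : ℝ)) * ((X i)^(m+j) * (1 - X i)^(k-(m+j))) := by
        rw [Finset.mul_sum]
        apply Finset.sum_congr rfl
        intro j hj
        have hj' : j ≤ k - m := by
          have := mem_range.mp hj; omega
        have h1 : k - (m+j) = (k-m) - j := by omega
        rw [h1, map_natCast (C : ℝ →+* MvPolynomial (Fin n) ℝ), pow_add]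
        ring
  rw [key]
  have hIco : ∑ c ∈ Finset.Ico m (k+1), C (coefN k m c) * ((X i : MvPolynomial (Fin n) ℝ)^c * (1 - X i)^(k-c))
      = ∑ c ∈ range (k+1), C (coefN k m c) * ((X i)^c * (1 - X i)^(k-c)) := by
    apply Finset.sum_subset
    · intro c hc
      rw [Finset.mem_Ico] at hc
      exact mem_range.mpr hc.2
    · intro c hc hnc
      rw [Finset.mem_Ico] at hnc
      rw [mem_range] at hc
      have hcm : c < m := by omega
      rw [coefN, if_neg (by omega)]
      simp
  rw [← hIco, Finset.sum_Ico_eq_sum_range]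
  have hrange : k + 1 - m = k - m + 1 := by omega
  rw [hrange]
  apply Finset.sum_congr rfl
  intro j hj
  have hj' : j ≤ k - m := by
    have := mem_range.mp hj; omega
  have hcoef : coefN k m (m + j) = (((k-m).choose j : ℕ) : ℝ) := by
    rw [coefN, if_pos (by omega)]
    congr 2
    omega
  rw [hcoef]

lemma monomial_expand (k : ℕ) (α : Fin n →₀ ℕ) (hα : ∀ i, α i ≤ k) :
    (∏ i, (X i : MvPolynomial (Fin n) ℝ)^(α i))
      = ∑ g ∈ Fintype.piFinset (fun _ : Fin n => range (k+1)),
          C (∏ i, coefN k (α i) (g i)) * ∏ i, ((X i)^(g i) * (1 - X i)^(k - g i)) := by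
  have h1 : (∏ i, (X i : MvPolynomial (Fin n) ℝ)^(α i))
      = ∏ i, ∑ c ∈ range (k+1), C (coefN k (α i) c) * ((X i)^c * (1 - X i)^(k-c)) := by
    apply Finset.prod_congr rfl
    intro i _
    exact X_pow_expand i (hα i)
  rw [h1, Finset.prod_univ_sum]
  apply Finset.sum_congr rfl
  intro g _
  rw [Finset.prod_mul_distrib, ← map_prod (C : ℝ →+* MvPolynomial (Fin n) ℝ)]

lemma q_expand (q : MvPolynomial (Fin n) ℝ) (k : ℕ)
    (hk : ∀ α ∈ q.support, ∀ i : Fin n, α i ≤ k) :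
    q = ∑ g ∈ Fintype.piFinset (fun _ : Fin n => range (k+1)),
        C (∑ α ∈ q.support, MvPolynomial.coeff α q * ∏ i, coefN k (α i) (g i)) *
          ∏ i, ((X i)^(g i) * (1 - X i)^(k - g i)) := by
  conv_lhs => rw [MvPolynomial.as_sum q]
  have h1 : ∀ α ∈ q.support, (monomial α (MvPolynomial.coeff α q) : MvPolynomial (Fin n) ℝ)
      = ∑ g ∈ Fintype.piFinset (fun _ : Fin n => range (k+1)),
          C (MvPolynomial.coeff α q * ∏ i, coefN k (α i) (g i)) *
            ∏ i, ((X i)^(g i) * (1 - X i)^(k - g i)) := by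
    intro α hα
    rw [MvPolynomial.monomial_eq, Finsupp.prod_pow, monomial_expand k α (fun i => hk α hα i),
      Finset.mul_sum]
    apply Finset.sum_congr rfl
    intro g _
    rw [map_mul]
    ring
  rw [Finset.sum_congr rfl h1, Finset.sum_comm]
  apply Finset.sum_congr rfl
  intro g _
  rw [map_sum, Finset.sum_mul]

lemma component_le_totalDegree (q : MvPolynomial (Fin n) ℝ) {α : Fin n →₀ ℕ}
    (hα : α ∈ q.support) (i : Fin n) : α i ≤ q.totalDegree := by
  have h1 : α i ≤ α.sum (fun _ e => e) := by
    rcases Nat.eq_zero_or_pos (α i) with h | h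
    · omega
    · have hi : i ∈ α.support := Finsupp.mem_support_iff.mpr (by omega)
      rw [Finsupp.sum]
      exact Finset.single_le_sum (fun j _ => Nat.zero_le _) hi
  exact le_trans h1 (MvPolynomial.le_totalDegree hα)

/-- Bernstein/Pólya-type representation: a polynomial strictly positive on the unit cube
`[0,1]ⁿ` is a nonnegative combination of the basis polynomials `∏ Xᵢ^{gᵢ} (1-Xᵢ)^{k-gᵢ}`. -/
lemma handelman01 (q : MvPolynomial (Fin n) ℝ)
    (hq : ∀ y : Fin n → ℝ, (∀ i, 0 ≤ y i ∧ y i ≤ 1) → 0 < MvPolynomial.eval y q) :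
    ∃ (k : ℕ) (W : (Fin n → ℕ) → ℝ),
      (∀ g ∈ Fintype.piFinset (fun _ : Fin n => range (k+1)), 0 ≤ W g) ∧
      q = ∑ g ∈ Fintype.piFinset (fun _ : Fin n => range (k+1)),
          C (W g) * ∏ i, ((X i)^(g i) * (1 - X i)^(k - g i)) := by
  classical
  -- minimum of q on the cube
  set D : Set (Fin n → ℝ) := Set.pi Set.univ (fun _ => Set.Icc (0:ℝ) 1) with hDdef
  have hD : IsCompact D := isCompact_univ_pi (fun _ => isCompact_Icc)
  have hne : D.Nonempty := ⟨fun _ => 0, fun i _ => by constructor <;> norm_num⟩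
  obtain ⟨y₀, hy₀D, hmin⟩ := hD.exists_isMinOn hne (continuous_eval q).continuousOn
  set μ : ℝ := MvPolynomial.eval y₀ q with hμdef
  have hμ : 0 < μ := hq y₀ (fun i => (hy₀D i (Set.mem_univ i)))
  have hminall : ∀ y ∈ D, μ ≤ MvPolynomial.eval y q := fun y hy => hmin hy
  -- degree and coefficient data
  set d : ℕ := q.totalDegree with hddef
  set Cq : ℝ := ∑ α ∈ q.support, |MvPolynomial.coeff α q| with hCqdef
  have hCq0 : 0 ≤ Cq := Finset.sum_nonneg (fun α _ => abs_nonneg _)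
  -- choice of k
  set k : ℕ := 2*d + 1 + Nat.ceil ((Cq * (n*d*d)) / μ) with hkdef
  have hk2d : 2*d ≤ k := by omega
  have hk1 : 1 ≤ k := by omega
  have hkd : (0:ℝ) < (k:ℝ) - d := by
    have : d < k := by omega
    have : (d:ℝ) < (k:ℝ) := by exact_mod_cast this
    linarith
  have herr : Cq * ((n:ℝ) * (d * ((d:ℝ)/((k:ℝ)-d)))) < μ := by
    have h1 : (Cq * (n*d*d)) / μ ≤ (Nat.ceil ((Cq * (n*d*d)) / μ) : ℝ) := Nat.le_ceil _
    have h2 : (Nat.ceil ((Cq * (n*d*d)) / μ) : ℝ) ≤ (k:ℝ) - d - 1 := by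
      have : Nat.ceil ((Cq * (n*d*d)) / μ) + d + 1 ≤ k := by omega
      have h3 : ((Nat.ceil ((Cq * (n*d*d)) / μ) : ℕ) : ℝ) + d + 1 ≤ (k:ℝ) := by
        exact_mod_cast this
      linarith
    have h4 : (Cq * (n*d*d)) / μ < (k:ℝ) - d := by linarith
    have h5 : Cq * (n*d*d) < ((k:ℝ) - d) * μ := by
      rw [div_lt_iff₀ hμ] at h4; linarith
    have h6 : Cq * ((n:ℝ) * (d * ((d:ℝ)/((k:ℝ)-d)))) = (Cq * (n*d*d)) / ((k:ℝ)-d) := by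
      field_simp
      try exact Or.inl (by ring)
      try ring
    rw [h6, div_lt_iff₀ hkd]
    linarith [mul_pos hμ hkd]
  -- exponents are bounded by d
  have hαd : ∀ α ∈ q.support, ∀ i : Fin n, (α : Fin n →₀ ℕ) i ≤ d :=
    fun α hα i => component_le_totalDegree q hα i
  have hαk : ∀ α ∈ q.support, ∀ i : Fin n, (α : Fin n →₀ ℕ) i ≤ k :=
    fun α hα i => le_trans (hαd α hα i) (by omega)
  refine ⟨k, fun g => ∑ α ∈ q.support, MvPolynomial.coeff α q * ∏ i, coefN k (α i) (g i),
    ?_, q_expand q k hαk⟩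
  intro g hg
  dsimp only
  have hgk : ∀ i, g i ≤ k := by
    intro i
    have := Fintype.mem_piFinset.mp hg i
    have := mem_range.mp this
    omega
  -- the scaled weight
  set w : ℝ := ∑ α ∈ q.support, MvPolynomial.coeff α q * ∏ i, Dr k (g i) (α i) with hwdef
  have hsplit : (∑ α ∈ q.support, MvPolynomial.coeff α q * ∏ i, coefN k (α i) (g i))
      = (∏ i, (k.choose (g i) : ℝ)) * w := by
    rw [hwdef, Finset.mul_sum]
    apply Finset.sum_congr rfl
    intro α hα
    have h1 : (∏ i, coefN k (α i) (g i))
        = ∏ i, ((k.choose (g i) : ℝ) * Dr k (g i) (α i)) := by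
      apply Finset.prod_congr rfl
      intro i _
      exact coefN_eq_choose_mul_Dr (hgk i) (hαk α hα i)
    rw [h1, Finset.prod_mul_distrib]
    ring
  rw [hsplit]
  apply mul_nonneg (Finset.prod_nonneg (fun i _ => by positivity))
  -- w is close to the value of q at the grid point
  set yg : Fin n → ℝ := fun i => (g i : ℝ)/(k:ℝ) with hygdef
  have hygD : yg ∈ D := by
    intro i _
    constructor
    · positivity
    · rw [hygdef]
      simp only []
      rw [div_le_one (by exact_mod_cast hk1)]
      exact_mod_cast hgk i
  have heval : MvPolynomial.eval yg q
      = ∑ α ∈ q.support, MvPolynomial.coeff α q * ∏ i, (yg i)^(α i) := by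
    rw [MvPolynomial.eval_eq']
  have hclose : |w - MvPolynomial.eval yg q| ≤ Cq * ((n:ℝ) * (d * ((d:ℝ)/((k:ℝ)-d)))) := by
    rw [heval, hwdef, ← Finset.sum_sub_distrib]
    calc |∑ α ∈ q.support, (MvPolynomial.coeff α q * ∏ i, Dr k (g i) (α i)
            - MvPolynomial.coeff α q * ∏ i, (yg i)^(α i))|
        ≤ ∑ α ∈ q.support, |MvPolynomial.coeff α q * ∏ i, Dr k (g i) (α i)
            - MvPolynomial.coeff α q * ∏ i, (yg i)^(α i)| := Finset.abs_sum_le_sum_abs _ _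
    _ ≤ ∑ α ∈ q.support, |MvPolynomial.coeff α q| * ((n:ℝ) * (d * ((d:ℝ)/((k:ℝ)-d)))) := by
        apply Finset.sum_le_sum
        intro α hα
        rw [← mul_sub, abs_mul]
        apply mul_le_mul_of_nonneg_left _ (abs_nonneg _)
        -- compare the two products
        have hprod := abs_prod_sub_prod_le Finset.univ
          (fun i => Dr k (g i) (α i)) (fun i => (yg i)^(α i)) ?_ ?_
        · refine le_trans hprod ?_
          have hterm : ∀ i : Fin n, |Dr k (g i) (α i) - (yg i)^(α i)|
              ≤ (d:ℝ) * ((d:ℝ)/((k:ℝ)-d)) := by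
            intro i
            have h1 := Dr_est (d := d) (hgk i) (hαd α hα i) hk2d hk1
            have h2 : ((α i : ℕ):ℝ) * ((d:ℝ)/((k:ℝ)-d)) ≤ (d:ℝ) * ((d:ℝ)/((k:ℝ)-d)) := by
              apply mul_le_mul_of_nonneg_right _ (by positivity)
              exact_mod_cast hαd α hα i
            rw [hygdef]
            exact le_trans h1 h2
          calc ∑ i, |Dr k (g i) (α i) - (yg i)^(α i)|
              ≤ ∑ _i : Fin n, (d:ℝ) * ((d:ℝ)/((k:ℝ)-d)) :=
                Finset.sum_le_sum (fun i _ => hterm i)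
          _ = (n:ℝ) * (d * ((d:ℝ)/((k:ℝ)-d))) := by
              rw [Finset.sum_const, Finset.card_univ, Fintype.card_fin, nsmul_eq_mul]
              try ring
        · intro i _
          exact Dr_abs_le_one (hgk i) (hαd α hα i) hk2d
        · intro i _
          rw [abs_pow]
          apply pow_le_one₀ (abs_nonneg _)
          rw [hygdef, abs_of_nonneg (by positivity)]
          simp only []
          rw [div_le_one (by exact_mod_cast hk1)]
          exact_mod_cast hgk i
    _ = Cq * ((n:ℝ) * (d * ((d:ℝ)/((k:ℝ)-d)))) := by
        rw [hCqdef, Finset.sum_mul]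
  have hq_yg : μ ≤ MvPolynomial.eval yg q := hminall yg hygD
  have : MvPolynomial.eval yg q - Cq * ((n:ℝ) * (d * ((d:ℝ)/((k:ℝ)-d)))) ≤ w := by
    have := abs_le.mp hclose
    linarith [this.1]
  linarith

/-! ### From positivity on a cube to membership in the ball cone -/

lemma eval_bind₁' (y : Fin n → ℝ) (f : Fin n → MvPolynomial (Fin n) ℝ)
    (φ : MvPolynomial (Fin n) ℝ) :
    MvPolynomial.eval y (bind₁ f φ) = MvPolynomial.eval (fun i => MvPolynomial.eval y (f i)) φ := by
  have h := aeval_bind₁ (S := ℝ) y f φ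
  rw [← MvPolynomial.coe_aeval_eq_eval, ← MvPolynomial.coe_aeval_eq_eval]
  simpa using h

lemma cube_pos_inT {N a : ℝ} (ha : 0 < a) (hNa : N ≤ a^2) (F : MvPolynomial (Fin n) ℝ)
    (hF : ∀ x : Fin n → ℝ, (∀ i, |x i| ≤ a) → 0 < MvPolynomial.eval x F) :
    InT (C N - ∑ l, (X l : MvPolynomial (Fin n) ℝ)^2) F := by
  classical
  set G : MvPolynomial (Fin n) ℝ := C N - ∑ l, (X l)^2 with hGdef
  set fwd : Fin n → MvPolynomial (Fin n) ℝ := fun i => C (2*a) * X i - C a with hfwd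
  set qt : MvPolynomial (Fin n) ℝ := bind₁ fwd F with hqtdef
  have hqt : ∀ y : Fin n → ℝ, (∀ i, 0 ≤ y i ∧ y i ≤ 1) → 0 < MvPolynomial.eval y qt := by
    intro y hy
    rw [hqtdef, eval_bind₁']
    apply hF
    intro i
    have : MvPolynomial.eval y (fwd i) = 2*a*(y i) - a := by
      rw [hfwd]
      simp
    rw [this, abs_le]
    obtain ⟨h0, h1⟩ := hy i
    constructor <;> nlinarith
  obtain ⟨k, W, hW, hrep⟩ := handelman01 qt hqt
  set bk : Fin n → MvPolynomial (Fin n) ℝ := fun i => C ((2*a)⁻¹) * (X i + C a) with hbk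
  have key : (C ((2*a)⁻¹) : MvPolynomial (Fin n) ℝ) * C (2*a) = 1 := by
    rw [← map_mul, inv_mul_cancel₀ (by positivity), map_one]
  have h2 : (C (2*a) : MvPolynomial (Fin n) ℝ) = 2 * C a := by
    rw [map_mul, map_ofNat]
  have hback : bind₁ bk qt = F := by
    rw [hqtdef, bind₁_bind₁]
    have hXid : (fun i => bind₁ bk (fwd i)) = (X : Fin n → MvPolynomial (Fin n) ℝ) := by
      funext i
      rw [hfwd]
      simp only [map_sub, map_mul, bind₁_C_right, bind₁_X_right, hbk]
      have h2c : (C (2*a) : MvPolynomial (Fin n) ℝ) = C 2 * C a := map_mul C 2 a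
      linear_combination (X i + C a) * key - (C ((2*a)⁻¹) * (X i + C a)) * h2c
    rw [hXid, bind₁_X_left]
    simp
  have hFrep : F = ∑ g ∈ Fintype.piFinset (fun _ : Fin n => range (k+1)),
      C (W g) * ∏ i, ((bk i)^(g i) * (1 - bk i)^(k - g i)) := by
    rw [← hback, hrep, map_sum]
    apply Finset.sum_congr rfl
    intro g _
    rw [map_mul, bind₁_C_right, map_prod]
    congr 1
    apply Finset.prod_congr rfl
    intro i _
    rw [map_mul, map_pow, map_pow, map_sub, map_one, bind₁_X_right]
  rw [hFrep]
  apply inT_sum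
  intro g hg
  apply inT_mul (inT_of_isSos (isSos_C (hW g hg)))
  apply inT_prod
  intro i _
  have hTplus : InT G (bk i) := by
    rw [hbk]
    exact inT_mul (inT_of_isSos (isSos_C (by positivity)))
      (by rw [add_comm]; exact inT_a_add_X ha hNa i)
  have hbk1 : (1 : MvPolynomial (Fin n) ℝ) - bk i = C ((2*a)⁻¹) * (C a - X i) := by
    rw [hbk]
    linear_combination (-1 : MvPolynomial (Fin n) ℝ) * key + C ((2*a)⁻¹) * h2
  have hTminus : InT G (1 - bk i) := by
    rw [hbk1]
    exact inT_mul (inT_of_isSos (isSos_C (by positivity))) (inT_a_sub_X ha hNa i)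
  exact inT_mul (inT_pow hTplus _) (inT_pow hTminus _)

end Putinar

open Putinar MvPolynomial Finset in
/-- (Theorem 1.) Suppose the quadratic module generated by `1 - g 1, ..., 1 - g m` is
Archimedean, and let `S = {x | ∀ i, g i (x) ≤ 1}`. If `p(x) < 1` for all `x ∈ S`, then
there exist sum of squares polynomials `τ i` such that `1 - p - ∑ i, τ i * (1 - g i)` is
a sum of squares. -/
theorem putinar_containment_certificate
    {n m : ℕ} (g : Fin m → MvPolynomial (Fin n) ℝ)
    (S : Set (Fin n → ℝ))
    (hS : S = {x : Fin n → ℝ | ∀ i, MvPolynomial.eval x (g i) ≤ 1})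
    (hArch : ∃ (N : ℝ) (σ₀ : MvPolynomial (Fin n) ℝ) (σ : Fin m → MvPolynomial (Fin n) ℝ),
      IsSos σ₀ ∧ (∀ i, IsSos (σ i)) ∧
      MvPolynomial.C N - ∑ k : Fin n, (MvPolynomial.X k) ^ 2
        = σ₀ + ∑ i, σ i * (1 - g i))
    (p : MvPolynomial (Fin n) ℝ)
    (hp : ∀ x ∈ S, MvPolynomial.eval x p < 1) :
    ∃ τ : Fin m → MvPolynomial (Fin n) ℝ,
      (∀ i, IsSos (τ i)) ∧ IsSos (1 - p - ∑ i, τ i * (1 - g i)) := by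
  classical
  obtain ⟨N, σ₀, σ, hσ₀, hσ, hG⟩ := hArch
  set G : MvPolynomial (Fin n) ℝ := C N - ∑ k : Fin n, (X k)^2 with hGdef
  set f : MvPolynomial (Fin n) ℝ := 1 - p with hfdef
  set a : ℝ := Real.sqrt (|N| + 1) with hadef
  have ha : 0 < a := Real.sqrt_pos.mpr (by positivity)
  have ha2 : a^2 = |N| + 1 := Real.sq_sqrt (by positivity)
  have hNa : N ≤ a^2 := by
    rw [ha2]
    have := le_abs_self N
    linarith
  -- the m+1 constraints
  set H : Fin (m+1) → MvPolynomial (Fin n) ℝ := Fin.snoc (fun i => 1 - g i) G with hHdef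
  have hpos : ∀ x : Fin n → ℝ, (∀ i, |x i| ≤ a) →
      (∀ j, 0 ≤ MvPolynomial.eval x (H j)) → 0 < MvPolynomial.eval x f := by
    intro x _ hj
    have hxS : x ∈ S := by
      rw [hS]
      intro i
      have := hj (Fin.castSucc i)
      rw [hHdef] at this
      simp only [Fin.snoc_castSucc] at this
      rw [map_sub, map_one] at this
      linarith
    have := hp x hxS
    rw [hfdef, map_sub, map_one]
    linarith
  obtain ⟨t, ht, hposF⟩ := penalty H f ha hpos
  set F : MvPolynomial (Fin n) ℝ := f - ∑ j, H j * t j with hFdef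
  have hFT : InT G F := by
    rw [hGdef]
    exact cube_pos_inT ha hNa F (fun x hx => hposF x hx)
  obtain ⟨A₀, A₁, hA₀, hA₁, hFeq⟩ := hFT
  -- decompose the penalty sum
  have hsum : ∑ j, H j * t j
      = (∑ i, (1 - g i) * t (Fin.castSucc i)) + G * t (Fin.last m) := by
    rw [Fin.sum_univ_castSucc]
    congr 1
    · apply Finset.sum_congr rfl
      intro i _
      rw [hHdef]
      simp only [Fin.snoc_castSucc]
    · rw [hHdef]
      simp only [Fin.snoc_last]
  refine ⟨fun i => t (Fin.castSucc i) + (A₁ + t (Fin.last m)) * σ i, ?_, ?_⟩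
  · intro i
    exact isSos_add (ht _) (isSos_mul (isSos_add hA₁ (ht _)) (hσ i))
  · have hexp : ∑ i, (t (Fin.castSucc i) + (A₁ + t (Fin.last m)) * σ i) * (1 - g i)
        = (∑ i, (1 - g i) * t (Fin.castSucc i))
          + (A₁ + t (Fin.last m)) * ∑ i, σ i * (1 - g i) := by
      rw [Finset.mul_sum, ← Finset.sum_add_distrib]
      apply Finset.sum_congr rfl
      intro i _
      ring
    have hkey : 1 - p - ∑ i, (t (Fin.castSucc i) + (A₁ + t (Fin.last m)) * σ i) * (1 - g i)
        = A₀ + (A₁ + t (Fin.last m)) * σ₀ := by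
      rw [hexp]
      have hGeq : G = σ₀ + ∑ i, σ i * (1 - g i) := by rw [hGdef]; exact hG
      have hFeq' : f - ∑ j, H j * t j = A₀ + A₁ * G := hFeq
      have hf' : f = 1 - p := hfdef
      linear_combination hFeq' + hsum + (A₁ + t (Fin.last m)) * hGeq + hf'
    rw [hkey]
    exact isSos_add hA₀ (isSos_mul (isSos_add hA₁ (ht _)) hσ₀)
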